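/- Let α > −1 and n ∈ ℕ with n ≥ 4, and suppose L_{n−1}^{(α+4)} and L_n^{(α)} have no common zeros. Let 0 < x_1 < ⋯ < x_n be the zeros of L_n^{(α)}. Then at least n − 2 of the n − 1 open intervals (x_1, x_2), (x_2, x_3), …, (x_{n−1}, x_n) contain exactly one zero of L_{n−1}^{(α+4)}. -/

import Mathlib

open Polynomial

/-- The generalized Laguerre polynomial `L_n^{(α)}(x) =
∑_{k=0}^{n} (−1)^k [∏_{j=k+1}^{n}(α+j)] / ((n−k)!·k!) · x^k`. -/
noncomputable def laguerre (α : ℝ) (n : ℕ) : Polynomial ℝ :=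
  ∑ k ∈ Finset.range (n + 1),
    Polynomial.C ((-1 : ℝ) ^ k * (∏ j ∈ Finset.Icc (k + 1) n, (α + (j : ℝ))) /
      ((n - k).factorial * k.factorial)) * Polynomial.X ^ k

open Finset in
lemma laguerre_coeff (α : ℝ) (n k : ℕ) (hk : k ≤ n) :
    (laguerre α n).coeff k =
      (-1 : ℝ) ^ k * (∏ j ∈ Finset.Icc (k + 1) n, (α + (j : ℝ))) /
        ((n - k).factorial * k.factorial) := by
  unfold laguerre
  rw [finset_sum_coeff]
  rw [Finset.sum_eq_single k]
  · simp
  · intro b _ hbk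
    simp [coeff_C_mul, coeff_X_pow, (Ne.symm hbk)]
  · intro h
    exact absurd (Finset.mem_range.mpr (Nat.lt_succ_of_le hk)) h

lemma laguerre_coeff_gt (α : ℝ) (n k : ℕ) (hk : n < k) :
    (laguerre α n).coeff k = 0 := by
  unfold laguerre
  rw [finset_sum_coeff]
  apply Finset.sum_eq_zero
  intro b hb
  have : b ≠ k := by
    rintro rfl
    exact absurd (Finset.mem_range.mp hb) (by omega)
  simp [coeff_C_mul, coeff_X_pow, Ne.symm this]

lemma laguerre_coeff_top (α : ℝ) (n : ℕ) :
    (laguerre α n).coeff n = (-1 : ℝ) ^ n / n.factorial := by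
  rw [laguerre_coeff α n n le_rfl]
  simp

lemma laguerre_natDegree (α : ℝ) (n : ℕ) : (laguerre α n).natDegree = n := by
  apply le_antisymm
  · apply natDegree_le_iff_coeff_eq_zero.mpr
    intro k hk
    exact laguerre_coeff_gt α n k hk
  · apply le_natDegree_of_ne_zero
    rw [laguerre_coeff_top]
    positivity

lemma laguerre_ne_zero (α : ℝ) (n : ℕ) : laguerre α n ≠ 0 := by
  intro h
  have h1 := laguerre_coeff_top α n
  rw [h, coeff_zero] at h1
  have h2 : ((-1 : ℝ) ^ n / n.factorial) ≠ 0 := by positivity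
  exact h2 h1.symm

lemma laguerre_leadingCoeff (α : ℝ) (n : ℕ) :
    (laguerre α n).leadingCoeff = (-1 : ℝ) ^ n / n.factorial := by
  rw [leadingCoeff, laguerre_natDegree, laguerre_coeff_top]

open Finset in
lemma prod_shift (α : ℝ) (a b : ℕ) :
    (∏ j ∈ Finset.Icc a b, (α + 1 + (j : ℝ))) = ∏ j ∈ Finset.Icc (a+1) (b+1), (α + (j : ℝ)) := by
  rw [← Finset.map_add_right_Icc a b 1, Finset.prod_map]
  simp only [addRightEmbedding_apply]
  apply Finset.prod_congr rfl
  intro j _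
  push_cast
  ring

lemma prod_split_bot (α : ℝ) (a b : ℕ) (h : a ≤ b) :
    (∏ j ∈ Finset.Icc a b, (α + (j : ℝ))) = (α + a) * ∏ j ∈ Finset.Icc (a+1) b, (α + (j : ℝ)) := by
  rw [← Finset.Ico_add_one_right_eq_Icc, Finset.prod_eq_prod_Ico_succ_bot (by omega), Finset.Ico_add_one_right_eq_Icc]

lemma fact_cast (a : ℕ) : ((a+1).factorial : ℝ) = (a+1) * a.factorial := by
  rw [Nat.factorial_succ]; push_cast; ring

lemma R1 (α : ℝ) (n : ℕ) :
    laguerre α (n+1) = laguerre (α+1) (n+1) - laguerre (α+1) n := by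
  ext k
  rw [coeff_sub]
  rcases lt_or_ge (n+1) k with hk | hk
  · rw [laguerre_coeff_gt _ _ _ hk, laguerre_coeff_gt _ _ _ hk,
      laguerre_coeff_gt _ _ _ (by omega)]
    ring
  rcases eq_or_lt_of_le hk with rfl | hk'
  · rw [laguerre_coeff _ _ _ le_rfl, laguerre_coeff _ _ _ le_rfl,
      laguerre_coeff_gt _ _ _ (by omega)]
    simp
  have hkn : k ≤ n := by omega
  rw [laguerre_coeff _ _ _ hk, laguerre_coeff _ _ _ hk, laguerre_coeff _ _ _ hkn]
  rw [prod_shift, prod_shift]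
  rw [prod_split_bot α (k+1) (n+1) (by omega)]
  rw [Finset.prod_Icc_succ_top (by omega : k+1+1 ≤ n+1+1)]
  have h1 : n + 1 - k = (n - k) + 1 := by omega
  rw [h1, fact_cast]
  have hf1 : ((n-k).factorial : ℝ) ≠ 0 := Nat.cast_ne_zero.mpr (Nat.factorial_ne_zero _)
  have hf2 : (k.factorial : ℝ) ≠ 0 := Nat.cast_ne_zero.mpr (Nat.factorial_ne_zero _)
  have hnk : ((n-k : ℕ) : ℝ) = (n : ℝ) - k := by
    push_cast [Nat.cast_sub hkn]; ring
  have h3 : ((n:ℝ) - k + 1) ≠ 0 := by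
    rw [← hnk]; positivity
  push_cast
  rw [hnk]
  field_simp
  ring

lemma R3 (α : ℝ) (n : ℕ) :
    derivative (laguerre α (n+1)) = - laguerre (α+1) n := by
  ext k
  rw [coeff_derivative, coeff_neg]
  rcases lt_or_ge n k with hk | hk
  · rw [laguerre_coeff_gt _ _ _ hk, laguerre_coeff_gt _ _ _ (by omega)]
    ring
  rw [laguerre_coeff _ _ _ hk, laguerre_coeff _ _ _ (by omega)]
  rw [prod_shift]
  have h2 : n + 1 - (k+1) = n - k := by omega
  rw [h2, Nat.factorial_succ]
  have hf2 : (k.factorial : ℝ) ≠ 0 := Nat.cast_ne_zero.mpr (Nat.factorial_ne_zero _)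
  have hf3 : ((n-k).factorial : ℝ) ≠ 0 := Nat.cast_ne_zero.mpr (Nat.factorial_ne_zero _)
  push_cast
  field_simp
  ring

lemma R2 (α : ℝ) (n : ℕ) :
    X * laguerre (α+1) n =
      C ((n:ℝ) + 1 + α) * laguerre α n - C ((n:ℝ)+1) * laguerre α (n+1) := by
  ext k
  rw [coeff_sub, coeff_C_mul, coeff_C_mul]
  cases k with
  | zero =>
    rw [mul_coeff_zero, coeff_X_zero, zero_mul,
      laguerre_coeff _ _ _ (by omega), laguerre_coeff _ _ _ (by omega)]
    rw [Finset.prod_Icc_succ_top (by omega : 0+1 ≤ n+1)]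
    simp only [Nat.sub_zero, Nat.factorial_zero]
    rw [fact_cast]
    have hf1 : ((n).factorial : ℝ) ≠ 0 := Nat.cast_ne_zero.mpr (Nat.factorial_ne_zero _)
    have hn1 : ((n:ℝ)+1) ≠ 0 := by positivity
    push_cast
    field_simp
    ring
  | succ m =>
    rw [coeff_X_mul]
    rcases lt_or_ge n m with hm | hm
    · rw [laguerre_coeff_gt _ _ _ hm, laguerre_coeff_gt _ _ _ (by omega),
        laguerre_coeff_gt _ _ _ (by omega)]
      ring
    rcases eq_or_lt_of_le hm with rfl | hmn
    · -- m = n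
      rw [laguerre_coeff _ _ _ le_rfl, laguerre_coeff_gt _ _ _ (by omega),
        laguerre_coeff _ _ _ (by omega)]
      rw [show Finset.Icc (m+1) m = ∅ from Finset.Icc_eq_empty (by omega)]
      rw [fact_cast]
      have hf2 : (m.factorial : ℝ) ≠ 0 := Nat.cast_ne_zero.mpr (Nat.factorial_ne_zero _)
      have hm1 : ((m:ℝ)+1) ≠ 0 := by positivity
      push_cast
      field_simp
      rw [Finset.Icc_eq_empty (by omega), Finset.prod_empty]
      ring
    · -- m < n, i.e. m + 1 ≤ n
      rw [laguerre_coeff _ _ _ (by omega), laguerre_coeff _ _ _ (by omega),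
        laguerre_coeff _ _ _ (by omega)]
      rw [prod_shift]
      rw [Finset.prod_Icc_succ_top (by omega : m+1+1 ≤ n+1)]
      have h1 : n - m = (n - (m+1)) + 1 := by omega
      have h2 : n + 1 - (m+1) = (n - (m+1)) + 1 := by omega
      rw [h1, h2, fact_cast, fact_cast]
      have hf1 : ((n-(m+1)).factorial : ℝ) ≠ 0 := Nat.cast_ne_zero.mpr (Nat.factorial_ne_zero _)
      have hf2 : (m.factorial : ℝ) ≠ 0 := Nat.cast_ne_zero.mpr (Nat.factorial_ne_zero _)
      have hnm : ((n-(m+1) : ℕ) : ℝ) = (n : ℝ) - (m+1) := by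
        push_cast [Nat.cast_sub (by omega : m+1 ≤ n)]; ring
      have h3 : ((n:ℝ) - ((m:ℝ)+1) + 1) ≠ 0 := by
        rw [← hnm]; positivity
      push_cast
      rw [hnm]
      field_simp
      ring

open Finset in
lemma R1e (α : ℝ) (n : ℕ) (t : ℝ) :
    (laguerre α (n+1)).eval t =
      (laguerre (α+1) (n+1)).eval t - (laguerre (α+1) n).eval t := by
  rw [R1]; simp

lemma R2e (α : ℝ) (n : ℕ) (t : ℝ) :
    t * (laguerre (α+1) n).eval t =
      ((n:ℝ) + 1 + α) * (laguerre α n).eval t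
        - ((n:ℝ)+1) * (laguerre α (n+1)).eval t := by
  have h := congrArg (eval t) (R2 α n)
  simpa using h

/-- The key mixed recurrence: for `m ≥ 0`, with `n = m+1`,
`t⁴ L_m^{(α+4)}(t) = (n+α)·Q̃(t)·L_m^{(α)}(t) + A(t)·L_n^{(α)}(t)`. -/
lemma bigid (α : ℝ) (m : ℕ) (t : ℝ) :
    t^4 * (laguerre (α+4) m).eval t =
      (((m:ℝ)+1) + α) *
        ((α+1)*(α+2)*(α+3) - 2*((m:ℝ)+1)*(α+2)*t - ((m:ℝ)+1)*t^2) *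
        (laguerre α m).eval t +
      (-((m:ℝ)+1)*(α+1)*(α+2)*(α+3)
        + (((m:ℝ)+1)*(α+3)*(((m:ℝ)+1)-α-2) + ((m:ℝ)+1)^2*(α+1))*t
        + (2*((m:ℝ)+1)^2 - ((m:ℝ)+1)*(α+3))*t^2 - ((m:ℝ)+1)*t^3) *
        (laguerre α (m+1)).eval t := by
  set n : ℝ := (m:ℝ)+1 with hn
  have hs1 := R2e α m t
  have h2 := R2e (α+1) m t
  have h3 := R2e (α+2) m t
  have h4 := R2e (α+3) m t
  have r0 := R1e α m t
  have r1 := R1e (α+1) m t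
  have r2 := R1e (α+2) m t
  rw [show α+1+1 = α+2 by ring] at h2 r1
  rw [show α+2+1 = α+3 by ring] at h3 r2
  rw [show α+3+1 = α+4 by ring] at h4
  -- step 2
  have s2 : t^2 * (laguerre (α+2) m).eval t =
      (α+1)*(n+α) * (laguerre α m).eval t
        - n * ((α+1) + t) * (laguerre α (m+1)).eval t := by
    linear_combination t*h2 + (α+1)*hs1 + n*t*r0
  have s3 : t^3 * (laguerre (α+3) m).eval t =
      (n+α) * ((α+1)*(α+2) - n*t) * (laguerre α m).eval t
        + (-(n*(α+2))*((α+1)+t) + n^2*t - n*t^2) * (laguerre α (m+1)).eval t := by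
    linear_combination t^2*h3 + n*t^2*r1 + n*t^2*r0 + (α+2)*s2 - n*t*hs1
  linear_combination t^3*h4 + n*t^3*r2 + n*t^3*r1 + n*t^3*r0 + (α+3)*s3
    - n*t*s2 - n*t^2*hs1

-- sign of a product of factors, negative exactly on a filtered part
lemma multiset_prod_sign (a b : ℝ) (hab : a < b) (s : Multiset ℝ)
    (hs : ∀ r ∈ s, r ≠ a ∧ r ≠ b) :
    0 < (-1 : ℝ) ^ (Multiset.card (s.filter (· ∈ Set.Ioo a b))) *
      (s.map (fun r => (a - r) * (b - r))).prod := by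
  induction s using Multiset.induction with
  | empty => simp
  | cons r s ih =>
    have hr := hs r (Multiset.mem_cons_self r s)
    have ih' := ih (fun r hr => hs r (Multiset.mem_cons_of_mem hr))
    rw [Multiset.map_cons, Multiset.prod_cons]
    by_cases hmem : r ∈ Set.Ioo a b
    · rw [Multiset.filter_cons_of_pos _ (by simpa using hmem)]
      have hneg : (a - r) * (b - r) < 0 := by
        apply mul_neg_of_neg_of_pos <;> [linarith [hmem.1]; linarith [hmem.2]]
      rw [Multiset.card_cons, pow_succ]
      nlinarith [ih', hneg]
    · rw [Multiset.filter_cons_of_neg _ (by simpa using hmem)]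
      have hpos : 0 < (a - r) * (b - r) := by
        rcases lt_trichotomy r a with h | h | h
        · apply mul_pos <;> linarith
        · exact absurd h hr.1
        · have hrb : b < r ∨ r = b ∨ r < b := by rcases lt_trichotomy b r with h'|h'|h' <;> tauto
          rcases hrb with h' | h' | h'
          · apply mul_pos_of_neg_of_neg <;> linarith
          · exact absurd h' hr.2
          · exact absurd (Set.mem_Ioo.mpr ⟨h, h'⟩) hmem
      nlinarith [ih', hpos]

lemma poly_no_root_sign (h : Polynomial ℝ) (hnr : ∀ t : ℝ, h.eval t ≠ 0) (a b : ℝ) :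
    0 < h.eval a * h.eval b := by
  rcases le_total a b with hab | hab
  · by_contra hc
    push_neg at hc
    have hne : h.eval a * h.eval b ≠ 0 := mul_ne_zero (hnr a) (hnr b)
    have hlt : h.eval a * h.eval b < 0 := lt_of_le_of_ne hc hne
    have hcont : ContinuousOn (fun t => h.eval t) (Set.Icc a b) :=
      (Polynomial.continuous h).continuousOn
    rcases lt_or_gt_of_ne (hnr a) with ha | ha <;> rcases lt_or_gt_of_ne (hnr b) with hb | hb
    · nlinarith
    · obtain ⟨t, _, ht⟩ := intermediate_value_Ioo hab hcont (by constructor <;> simp [ha, hb] : (0:ℝ) ∈ Set.Ioo (h.eval a) (h.eval b))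
      exact hnr t ht
    · obtain ⟨t, _, ht⟩ := intermediate_value_Ioo' hab hcont (by constructor <;> simp [ha, hb] : (0:ℝ) ∈ Set.Ioo (h.eval b) (h.eval a))
      exact hnr t ht
    · nlinarith
  · by_contra hc
    push_neg at hc
    have hne : h.eval a * h.eval b ≠ 0 := mul_ne_zero (hnr a) (hnr b)
    have hlt : h.eval a * h.eval b < 0 := lt_of_le_of_ne hc hne
    have hcont : ContinuousOn (fun t => h.eval t) (Set.Icc b a) :=
      (Polynomial.continuous h).continuousOn
    rcases lt_or_gt_of_ne (hnr a) with ha | ha <;> rcases lt_or_gt_of_ne (hnr b) with hb | hb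
    · nlinarith
    · obtain ⟨t, _, ht⟩ := intermediate_value_Ioo' hab hcont (by constructor <;> simp [ha, hb] : (0:ℝ) ∈ Set.Ioo (h.eval a) (h.eval b))
      exact hnr t ht
    · obtain ⟨t, _, ht⟩ := intermediate_value_Ioo hab hcont (by constructor <;> simp [ha, hb] : (0:ℝ) ∈ Set.Ioo (h.eval b) (h.eval a))
      exact hnr t ht
    · nlinarith

/-- Sign/parity relation for polynomial evaluations at two non-root points. -/
lemma poly_sign_parity (g : Polynomial ℝ) (hg : g ≠ 0) (a b : ℝ) (hab : a < b)
    (ha : g.eval a ≠ 0) (hb : g.eval b ≠ 0) :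
    0 < (-1 : ℝ) ^ (Multiset.card (g.roots.filter (· ∈ Set.Ioo a b))) *
      (g.eval a * g.eval b) := by
  obtain ⟨h, hgh, hdeg, hroots0⟩ := g.exists_prod_multiset_X_sub_C_mul
  have hne : h ≠ 0 := by
    rintro rfl
    rw [mul_zero] at hgh
    exact hg hgh.symm
  have hnr : ∀ t : ℝ, h.eval t ≠ 0 := by
    intro t ht
    have : t ∈ h.roots := (mem_roots hne).mpr ht
    rw [hroots0] at this
    simp at this
  have keval : ∀ t : ℝ, g.eval t = (g.roots.map (fun r => t - r)).prod * h.eval t := by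
    intro t
    conv_lhs => rw [← hgh]
    rw [eval_mul, eval_multiset_prod, Multiset.map_map]
    congr 2
    apply Multiset.map_congr rfl
    intro r _
    simp
  have hroots_ne : ∀ r ∈ g.roots, r ≠ a ∧ r ≠ b := by
    intro r hr
    constructor <;> rintro rfl <;>
      [exact ha (isRoot_of_mem_roots hr); exact hb (isRoot_of_mem_roots hr)]
  have h1 := multiset_prod_sign a b hab g.roots hroots_ne
  have h2 := poly_no_root_sign h hnr a b
  have h3 : (g.roots.map (fun r => a - r)).prod * (g.roots.map (fun r => b - r)).prod
      = (g.roots.map (fun r => (a - r) * (b - r))).prod := by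
    rw [← Multiset.prod_map_mul]
  have key : g.eval a * g.eval b =
      (g.roots.map (fun r => (a - r) * (b - r))).prod * (h.eval a * h.eval b) := by
    rw [keval a, keval b, ← h3]; ring
  have h4 := mul_pos h1 h2
  calc (0:ℝ) < ((-1 : ℝ) ^ (Multiset.card (g.roots.filter (· ∈ Set.Ioo a b))) *
      (g.roots.map (fun r => (a - r) * (b - r))).prod) * (h.eval a * h.eval b) := h4
    _ = (-1 : ℝ) ^ (Multiset.card (g.roots.filter (· ∈ Set.Ioo a b))) *
      (g.eval a * g.eval b) := by rw [key]; ring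

open Finset in
lemma finset_prod_neg_sign (s : Finset ℕ) (f : ℕ → ℝ) (hf : ∀ j ∈ s, f j < 0) :
    0 < (-1 : ℝ) ^ s.card * ∏ j ∈ s, f j := by
  induction s using Finset.cons_induction with
  | empty => simp
  | cons a s ha ih =>
    rw [Finset.prod_cons, Finset.card_cons, pow_succ]
    have h1 := hf a (Finset.mem_cons_self a s)
    have h2 := ih (fun j hj => hf j (Finset.mem_cons_of_mem hj))
    nlinarith

lemma poly_factor (p : Polynomial ℝ) (n : ℕ) (hn : 1 ≤ n) (hdeg : p.natDegree = n)
    (x : ℕ → ℝ) (hinj : Set.InjOn x (Finset.Icc 1 n))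
    (hroots : ∀ i ∈ Finset.Icc 1 n, p.eval (x i) = 0) :
    p = C p.leadingCoeff * ∏ i ∈ Finset.Icc 1 n, (X - C (x i)) := by
  set q : Polynomial ℝ := ∏ i ∈ Finset.Icc 1 n, (X - C (x i)) with hq
  have hqmonic : q.Monic := monic_prod_of_monic _ _ (fun i _ => monic_X_sub_C (x i))
  have hqdeg : q.natDegree = n := by
    rw [hq, natDegree_prod_of_monic _ _ (fun i _ => monic_X_sub_C (x i))]
    simp [Nat.card_Icc]
  have hcard : (Finset.Icc 1 n).card = n := by simp [Nat.card_Icc]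
  have hd : p - C p.leadingCoeff * q = 0 := by
    apply Polynomial.eq_zero_of_degree_lt_of_eval_index_eq_zero (Finset.Icc 1 n) hinj
    · rw [hcard]
      apply Polynomial.degree_lt_iff_coeff_zero _ _ |>.mpr
      intro m hm
      have hm' : n ≤ m := by exact_mod_cast hm
      rw [coeff_sub, coeff_C_mul]
      rcases eq_or_lt_of_le hm' with rfl | hm''
      · rw [show q.coeff n = 1 by rw [← hqdeg]; exact hqmonic.coeff_natDegree,
          show p.coeff n = p.leadingCoeff by rw [← hdeg]; rfl]
        ring
      · rw [coeff_eq_zero_of_natDegree_lt (by omega), coeff_eq_zero_of_natDegree_lt (by omega)]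
        ring
    · intro i hi
      rw [eval_sub, eval_mul, eval_C, hroots i hi, hq, eval_prod,
        Finset.prod_eq_zero hi (by simp : eval (x i) (X - C (x i)) = 0)]
      ring
  linear_combination hd

lemma deriv_eval_at_root (lc : ℝ) (n : ℕ) (x : ℕ → ℝ) (i : ℕ) (hi : i ∈ Finset.Icc 1 n) :
    (derivative (C lc * ∏ j ∈ Finset.Icc 1 n, (X - C (x j)))).eval (x i) =
      lc * ∏ j ∈ (Finset.Icc 1 n).erase i, (x i - x j) := by
  classical
  rw [derivative_C_mul, eval_mul, eval_C]
  congr 1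
  have hprod : (∏ j ∈ Finset.Icc 1 n, (X - C (x j))) =
      (Multiset.map (fun a => X - C a) ((Finset.Icc 1 n).val.map x)).prod := by
    rw [Multiset.map_map, Finset.prod_eq_multiset_prod]
    rfl
  have hmem : x i ∈ (Finset.Icc 1 n).val.map x :=
    Multiset.mem_map_of_mem x hi
  rw [hprod, eval_multiset_prod_X_sub_C_derivative hmem]
  rw [← Multiset.map_erase_of_mem x _ hi, ← Finset.erase_val,
    Finset.prod_eq_multiset_prod, Multiset.map_map]
  rfl

lemma prod_erase_sign (n : ℕ) (x : ℕ → ℝ) (i : ℕ) (hi : i ∈ Finset.Icc 1 n)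
    (hxmono : ∀ a ∈ Finset.Icc 1 n, ∀ b ∈ Finset.Icc 1 n, a < b → x a < x b) :
    0 < (-1 : ℝ) ^ (n - i) * ∏ j ∈ (Finset.Icc 1 n).erase i, (x i - x j) := by
  have hi' := Finset.mem_Icc.mp hi
  have hsplit : (Finset.Icc 1 n).erase i = Finset.Icc 1 (i-1) ∪ Finset.Icc (i+1) n := by
    ext j
    simp only [Finset.mem_erase, Finset.mem_Icc, Finset.mem_union]
    omega
  have hdisj : Disjoint (Finset.Icc 1 (i-1)) (Finset.Icc (i+1) n) := by
    rw [Finset.disjoint_left]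
    intro j hj1 hj2
    rw [Finset.mem_Icc] at hj1 hj2
    omega
  rw [hsplit, Finset.prod_union hdisj]
  have hpos : 0 < ∏ j ∈ Finset.Icc 1 (i-1), (x i - x j) := by
    apply Finset.prod_pos
    intro j hj
    have hj' := Finset.mem_Icc.mp hj
    have := hxmono j (Finset.mem_Icc.mpr ⟨hj'.1, by omega⟩) i hi (by omega)
    linarith
  have hneg := finset_prod_neg_sign (Finset.Icc (i+1) n) (fun j => x i - x j) (by
    intro j hj
    have hj' := Finset.mem_Icc.mp hj
    have := hxmono i hi j (Finset.mem_Icc.mpr ⟨by omega, hj'.2⟩) (by omega)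
    show x i - x j < 0
    linarith)
  have hcard : (Finset.Icc (i+1) n).card = n - i := by simp [Nat.card_Icc]
  rw [hcard] at hneg
  nlinarith

open Finset in
lemma multiset_sum_filter_card_le (M : Multiset ℝ) (S : Finset ℕ) (P : ℕ → ℝ → Prop)
    [∀ i a, Decidable (P i a)]
    (hdisj : ∀ a : ℝ, ∀ j ∈ S, ∀ k ∈ S, P j a → P k a → j = k) :
    ∑ j ∈ S, Multiset.card (M.filter (P j)) ≤ Multiset.card M := by
  classical
  induction S using Finset.cons_induction generalizing M with
  | empty => simp
  | cons a s ha ih =>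
    rw [Finset.sum_cons]
    have hsub : ∀ j ∈ s, M.filter (P j) = (M.filter (fun t => ¬ P a t)).filter (P j) := by
      intro j hj
      rw [Multiset.filter_filter]
      apply Multiset.filter_congr
      intro t _
      constructor
      · intro hpt
        refine ⟨hpt, fun hpa => ?_⟩
        have := hdisj t j (Finset.mem_cons_of_mem hj) a (Finset.mem_cons_self a s) hpt hpa
        exact ha (this ▸ hj)
      · exact fun h => h.1
    have h1 : ∑ j ∈ s, Multiset.card (M.filter (P j))
        = ∑ j ∈ s, Multiset.card ((M.filter (fun t => ¬ P a t)).filter (P j)) := by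
      apply Finset.sum_congr rfl
      intro j hj
      rw [← hsub j hj]
    have h2 := ih (M.filter (fun t => ¬ P a t)) (fun t j hj k hk hpj hpk =>
      hdisj t j (Finset.mem_cons_of_mem hj) k (Finset.mem_cons_of_mem hk) hpj hpk)
    have h3 : Multiset.card (M.filter (P a)) +
        Multiset.card (M.filter (fun t => ¬ P a t)) = Multiset.card M := by
      rw [← Multiset.card_add, Multiset.filter_add_not]
    omega

set_option maxHeartbeats 2000000 in
theorem laguerre_partial_interlacing_deg_pred_param_four
    (α : ℝ) (hα : -1 < α) (n : ℕ) (hn : 4 ≤ n)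
    (hnc : ∀ t : ℝ, ¬((laguerre (α + 4) (n - 1)).eval t = 0 ∧ (laguerre α n).eval t = 0))
    (x : ℕ → ℝ)
    (hxpos : ∀ i ∈ Finset.Icc 1 n, 0 < x i)
    (hxmono : ∀ i ∈ Finset.Icc 1 n, ∀ j ∈ Finset.Icc 1 n, i < j → x i < x j)
    (hxroots : ∀ t : ℝ, (laguerre α n).eval t = 0 ↔ ∃ i ∈ Finset.Icc 1 n, x i = t) :
    ∃ S : Finset ℕ, S ⊆ Finset.Icc 1 (n - 1) ∧ n - 2 ≤ S.card ∧
      ∀ i ∈ S, ∃! t : ℝ, t ∈ Set.Ioo (x i) (x (i + 1)) ∧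
        (laguerre (α + 4) (n - 1)).eval t = 0 := by
  classical
  obtain ⟨m, hm1⟩ : ∃ m, m + 1 = n := ⟨n - 1, by omega⟩
  have hmn : n - 1 = m := by omega
  rw [hmn] at hnc ⊢
  set p := laguerre α n with hp
  set g := laguerre (α+4) m with hgdef
  have hg' : laguerre (α + 4) m = g := rfl
  -- basic positivity
  have hα1 : (0:ℝ) < α + 1 := by linarith
  have hα2 : (0:ℝ) < α + 2 := by linarith
  have hα3 : (0:ℝ) < α + 3 := by linarith
  have hmR : ((m:ℝ) + 1) = (n:ℝ) := by exact_mod_cast congrArg (Nat.cast : ℕ → ℝ) hm1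
  have hnα : (0:ℝ) < ((m:ℝ)+1) + α := by
    rw [hmR]
    have : (4:ℝ) ≤ (n:ℝ) := by exact_mod_cast hn
    linarith
  have hnpos : (0:ℝ) < (m:ℝ) + 1 := by positivity
  -- roots of p
  have hproot : ∀ i ∈ Finset.Icc 1 n, p.eval (x i) = 0 :=
    fun i hi => (hxroots (x i)).mpr ⟨i, hi, rfl⟩
  have hinj : Set.InjOn x (Finset.Icc 1 n) := by
    intro a ha b hb hab
    by_contra hne
    rcases lt_or_gt_of_ne hne with h | h
    · exact absurd hab (ne_of_lt (hxmono a ha b hb h))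
    · exact absurd hab.symm (ne_of_lt (hxmono b hb a ha h))
  have hdegp : p.natDegree = n := laguerre_natDegree α n
  have hfac := poly_factor p n (by omega) hdegp x hinj hproot
  have hlc : p.leadingCoeff = (-1:ℝ)^n / n.factorial := laguerre_leadingCoeff α n
  -- sign of derivative at roots
  have hD : ∀ i ∈ Finset.Icc 1 n, 0 < (-1:ℝ)^i * (derivative p).eval (x i) := by
    intro i hi
    have hin := Finset.mem_Icc.mp hi
    have h1 : (derivative p).eval (x i) =
        p.leadingCoeff * ∏ j ∈ (Finset.Icc 1 n).erase i, (x i - x j) := by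
      conv_lhs => rw [hfac]
      exact deriv_eval_at_root _ n x i hi
    have h2 := prod_erase_sign n x i hi hxmono
    rw [h1, hlc]
    have hfact : (0:ℝ) < (n.factorial : ℝ) := by
      exact_mod_cast Nat.factorial_pos n
    have hpow : (-1:ℝ)^i * (-1:ℝ)^n = (-1:ℝ)^(n-i) := by
      rw [← pow_add, show i + n = (n-i) + 2*i by omega, pow_add, pow_mul]
      norm_num
    have : 0 < ((-1:ℝ)^i * (-1:ℝ)^n) * (∏ j ∈ (Finset.Icc 1 n).erase i, (x i - x j)) := by
      rw [hpow]; exact h2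
    calc (0:ℝ) < ((-1:ℝ)^i * (-1:ℝ)^n) * (∏ j ∈ (Finset.Icc 1 n).erase i, (x i - x j))
          / (n.factorial : ℝ) := by positivity
      _ = (-1:ℝ)^i * ((-1:ℝ)^n / n.factorial *
            ∏ j ∈ (Finset.Icc 1 n).erase i, (x i - x j)) := by ring
  -- v and q
  set v : ℕ → ℝ := fun i => g.eval (x i) with hv
  set q : ℕ → ℝ := fun i =>
    (α+1)*(α+2)*(α+3) - 2*((m:ℝ)+1)*(α+2)*(x i) - ((m:ℝ)+1)*(x i)^2 with hq
  have hvne : ∀ i ∈ Finset.Icc 1 n, v i ≠ 0 := by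
    intro i hi hvi
    exact hnc (x i) ⟨hvi, hproot i hi⟩
  -- key sign relation
  have hkey : ∀ i ∈ Finset.Icc 1 n, 0 < (-1:ℝ)^(i+1) * (q i * v i) := by
    intro i hi
    have hxi : 0 < x i := hxpos i hi
    have hb := bigid α m (x i)
    rw [hm1] at hb
    rw [hproot i hi, mul_zero, add_zero] at hb
    have hr2 := R2e α m (x i)
    rw [hm1, hproot i hi, mul_zero, sub_zero] at hr2
    have hr3 : (laguerre (α+1) m).eval (x i) = - (derivative p).eval (x i) := by
      have := R3 α m
      rw [hm1] at this
      rw [hp, this]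
      simp
    -- hb : x i ^4 * v i = ((m+1)+α) * q i * L0
    -- hr2 : x i * (-(D i)) = ((m+1)+α) * L0
    rw [hr3] at hr2
    have hDi := hD i hi
    set D := (derivative p).eval (x i) with hDdef
    set L0 := (laguerre α m).eval (x i) with hL0
    -- combine : x i ^ 4 * v i = q i * (x i * (-D))
    have hcomb : (x i)^4 * v i = q i * (x i * (-D)) := by
      rw [hr2]
      rw [hb]
      ring
    have hqne : q i ≠ 0 := by
      intro hq0
      rw [hq0] at hcomb
      have hx4 : (0:ℝ) < (x i)^4 := by positivity
      have : v i = 0 := by nlinarith [hcomb]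
      exact hvne i hi this
    have hq2 : 0 < (q i)^2 := pow_two_pos_of_ne_zero hqne
    have hx4 : (0:ℝ) < (x i)^4 := by positivity
    have h5 : 0 < (-1:ℝ)^(i+1) * (q i * v i) * (x i)^4 := by
      have hc2 : (-1:ℝ)^(i+1) * (q i * v i) * (x i)^4
          = ((q i)^2 * ((-1:ℝ)^i * D)) * (x i) := by
        calc (-1:ℝ)^(i+1) * (q i * v i) * (x i)^4
            = (-1:ℝ)^(i+1) * q i * ((x i)^4 * v i) := by ring
          _ = (-1:ℝ)^(i+1) * q i * (q i * (x i * (-D))) := by rw [hcomb]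
          _ = ((q i)^2 * ((-1:ℝ)^i * D)) * (x i) := by rw [pow_succ]; ring
      rw [hc2]
      exact mul_pos (mul_pos hq2 hDi) hxi
    by_contra hcon
    push_neg at hcon
    nlinarith [h5, hx4]
  -- q strictly decreasing along the root sequence
  have hqdec : ∀ i ∈ Finset.Icc 1 n, ∀ j ∈ Finset.Icc 1 n, i < j → q j < q i := by
    intro i hi j hj hij
    have h1 := hxmono i hi j hj hij
    have h2 := hxpos i hi
    have h3 := hxpos j hj
    simp only [hq]
    nlinarith [mul_pos (mul_pos hnpos hα2) (sub_pos.mpr h1),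
      mul_pos hnpos (mul_pos (add_pos h2 h3) (sub_pos.mpr h1))]
  -- consecutive sign product
  have hqv : ∀ i ∈ Finset.Icc 1 m, q i * q (i+1) * (v i * v (i+1)) < 0 := by
    intro i hi
    have hi' := Finset.mem_Icc.mp hi
    have hiI : i ∈ Finset.Icc 1 n := Finset.mem_Icc.mpr (by omega)
    have hi1I : i+1 ∈ Finset.Icc 1 n := Finset.mem_Icc.mpr (by omega)
    have h3 := mul_pos (hkey i hiI) (hkey (i+1) hi1I)
    have hsq : ((-1:ℝ)^(i+1)) * ((-1:ℝ)^(i+1)) = 1 := by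
      rw [← pow_add]
      exact Even.neg_one_pow ⟨i+1, by ring⟩
    rw [pow_succ ((-1:ℝ)) (i+1)] at h3
    have hexp : ((-1:ℝ)^(i+1) * (q i * v i)) * (((-1:ℝ)^(i+1) * -1) * (q (i+1) * v (i+1)))
        = -(((-1:ℝ)^(i+1)) * ((-1:ℝ)^(i+1))) * (q i * q (i+1) * (v i * v (i+1))) := by
      ring
    rw [hexp, hsq] at h3
    linarith
  set T := (Finset.Icc 1 m).filter (fun i => ¬ (v i * v (i+1) < 0)) with hT
  set S := (Finset.Icc 1 m).filter (fun i => v i * v (i+1) < 0) with hS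
  have hTbad : ∀ i ∈ T, 0 < q i ∧ q (i+1) < 0 := by
    intro i hiT
    obtain ⟨hiI, hnlt⟩ := Finset.mem_filter.mp hiT
    have hi' := Finset.mem_Icc.mp hiI
    have hiN : i ∈ Finset.Icc 1 n := Finset.mem_Icc.mpr (by omega)
    have hi1N : i+1 ∈ Finset.Icc 1 n := Finset.mem_Icc.mpr (by omega)
    have hv1 := hvne i hiN
    have hv2 := hvne (i+1) hi1N
    have hvpos : 0 < v i * v (i+1) :=
      lt_of_le_of_ne (not_lt.mp hnlt) (Ne.symm (mul_ne_zero hv1 hv2))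
    have hqq : q i * q (i+1) < 0 := by nlinarith [hqv i hiI, hvpos]
    have hdec := hqdec i hiN (i+1) hi1N (by omega)
    constructor <;> nlinarith [hqq, hdec]
  have hTpair : ∀ a b, a ∈ T → b ∈ T → a < b → False := by
    intro a b haT hbT hab
    have h1 := (hTbad a haT).2
    have h2 := (hTbad b hbT).1
    have haI := Finset.mem_Icc.mp (Finset.mem_filter.mp haT).1
    have hbI := Finset.mem_Icc.mp (Finset.mem_filter.mp hbT).1
    have ha1N : a+1 ∈ Finset.Icc 1 n := Finset.mem_Icc.mpr (by omega)
    have hbN : b ∈ Finset.Icc 1 n := Finset.mem_Icc.mpr (by omega)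
    rcases eq_or_lt_of_le (show a+1 ≤ b by omega) with rfl | h
    · linarith
    · have := hqdec (a+1) ha1N b hbN h
      linarith
  have hTcard : T.card ≤ 1 := by
    rw [Finset.card_le_one]
    intro i hiT j hjT
    rcases lt_trichotomy i j with h | h | h
    · exact (hTpair i j hiT hjT h).elim
    · exact h
    · exact (hTpair j i hjT hiT h).elim
  have hScard : n - 2 ≤ S.card := by
    have hsplit := Finset.card_filter_add_card_filter_not
      (s := Finset.Icc 1 m) (p := fun i => v i * v (i+1) < 0)
    have hcard : (Finset.Icc 1 m).card = m := by
      rw [Nat.card_Icc]; omega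
    rw [← hS, ← hT] at hsplit
    omega
  -- root counting for g
  have hgne : g ≠ 0 := laguerre_ne_zero _ _
  have hdegg : g.natDegree = m := laguerre_natDegree _ _
  set c : ℕ → ℕ :=
    fun i => Multiset.card (g.roots.filter (· ∈ Set.Ioo (x i) (x (i+1)))) with hc
  have hodd : ∀ i ∈ S, Odd (c i) := by
    intro i hiS
    obtain ⟨hiI, hvlt⟩ := Finset.mem_filter.mp hiS
    have hi' := Finset.mem_Icc.mp hiI
    have hiN : i ∈ Finset.Icc 1 n := Finset.mem_Icc.mpr (by omega)
    have hi1N : i+1 ∈ Finset.Icc 1 n := Finset.mem_Icc.mpr (by omega)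
    have hmono := hxmono i hiN (i+1) hi1N (by omega)
    have hpar' : 0 < (-1:ℝ)^(c i) * (v i * v (i+1)) :=
      poly_sign_parity g hgne (x i) (x (i+1)) hmono (hvne i hiN) (hvne (i+1) hi1N)
    rcases Nat.even_or_odd (c i) with he | ho
    · exfalso
      rw [he.neg_one_pow, one_mul] at hpar'
      linarith
    · exact ho
  have hdisjroot : ∀ a : ℝ, ∀ j ∈ S, ∀ k ∈ S,
      a ∈ Set.Ioo (x j) (x (j+1)) → a ∈ Set.Ioo (x k) (x (k+1)) → j = k := by
    have key : ∀ b d, b ∈ S → d ∈ S → b < d → ∀ a : ℝ,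
        a ∈ Set.Ioo (x b) (x (b+1)) → a ∈ Set.Ioo (x d) (x (d+1)) → False := by
      intro b d hbS hdS hbd a h1 h2
      have hbI := Finset.mem_Icc.mp (Finset.mem_filter.mp hbS).1
      have hdI := Finset.mem_Icc.mp (Finset.mem_filter.mp hdS).1
      have hb1N : b+1 ∈ Finset.Icc 1 n := Finset.mem_Icc.mpr (by omega)
      have hdN : d ∈ Finset.Icc 1 n := Finset.mem_Icc.mpr (by omega)
      have hle : x (b+1) ≤ x d := by
        rcases eq_or_lt_of_le (show b+1 ≤ d by omega) with rfl | h
        · exact le_refl _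
        · exact (hxmono (b+1) hb1N d hdN h).le
      have := h1.2
      have := h2.1
      linarith
    intro a j hj k hk haj hak
    rcases lt_trichotomy j k with h | h | h
    · exact (key j k hj hk h a haj hak).elim
    · exact h
    · exact (key k j hk hj h a hak haj).elim
  have hsum : ∑ j ∈ S, c j ≤ m := by
    calc ∑ j ∈ S, c j ≤ Multiset.card g.roots :=
          multiset_sum_filter_card_le g.roots S
            (fun j a => a ∈ Set.Ioo (x j) (x (j+1))) hdisjroot
      _ ≤ g.natDegree := g.card_roots'
      _ = m := hdegg
  refine ⟨S, Finset.filter_subset _ _, hScard, ?_⟩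
  intro i hiS
  have hoddi := hodd i hiS
  have hpos : 0 < c i := hoddi.pos
  have hne0 : g.roots.filter (· ∈ Set.Ioo (x i) (x (i+1))) ≠ 0 := by
    intro h0
    rw [hc] at hpos
    simp only [h0] at hpos
    simp at hpos
  obtain ⟨r, hr⟩ := Multiset.exists_mem_of_ne_zero hne0
  obtain ⟨hr1, hr2⟩ := Multiset.mem_filter.mp hr
  refine ⟨r, ⟨hr2, isRoot_of_mem_roots hr1⟩, ?_⟩
  intro y hy
  by_contra hne
  have hyroots : y ∈ g.roots := (mem_roots hgne).mpr hy.2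
  have hyf : y ∈ g.roots.filter (· ∈ Set.Ioo (x i) (x (i+1))) :=
    Multiset.mem_filter.mpr ⟨hyroots, hy.1⟩
  have h2le : 2 ≤ c i := by
    have hsubset : ({y, r} : Finset ℝ) ⊆
        (g.roots.filter (· ∈ Set.Ioo (x i) (x (i+1)))).toFinset := by
      intro t ht
      rcases Finset.mem_insert.mp ht with rfl | ht'
      · exact Multiset.mem_toFinset.mpr hyf
      · rw [Finset.mem_singleton] at ht'
        subst ht'
        exact Multiset.mem_toFinset.mpr hr
    have hcard2 : ({y, r} : Finset ℝ).card = 2 := by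
      rw [Finset.card_insert_of_notMem (by simpa using hne), Finset.card_singleton]
    calc 2 = ({y, r} : Finset ℝ).card := hcard2.symm
      _ ≤ (g.roots.filter (· ∈ Set.Ioo (x i) (x (i+1)))).toFinset.card :=
          Finset.card_le_card hsubset
      _ ≤ c i := Multiset.toFinset_card_le _
  have h3le : 3 ≤ c i := by
    rcases hoddi with ⟨k, hk⟩
    omega
  have hsum_lb : S.card - 1 + 3 ≤ ∑ j ∈ S, c j := by
    have hsplit := Finset.sum_erase_add S c hiS
    have h1 : (S.erase i).card ≤ ∑ j ∈ S.erase i, c j := by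
      rw [Finset.card_eq_sum_ones]
      apply Finset.sum_le_sum
      intro j hj
      exact (hodd j (Finset.mem_of_mem_erase hj)).pos
    have h2 : (S.erase i).card = S.card - 1 := Finset.card_erase_of_mem hiS
    omega
  omega
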